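/- Let Λ_1, ..., Λ_n be i.i.d. Bernoulli(π) with π ∈ (0,1). Then limsup_{n→∞} E[ n² / ((n − Σ_{i=1}^n Λ_i) ∨ 1)² ] ≤ 1/(1−π)², and in particular this sequence of expectations is bounded. -/

import Mathlib

open MeasureTheory ProbabilityTheory Filter
open scoped ENNReal Classical BigOperators

noncomputable section

variable {Ω : Type*}

/-- The Bernoulli(π) law on ℝ, i.e. `(1-π)δ₀ + πδ₁`. -/
def bernoulliLaw (π : ℝ) : Measure ℝ :=
  ENNReal.ofReal (1 - π) • Measure.dirac (0 : ℝ) + ENNReal.ofReal π • Measure.dirac 1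

open Topology

lemma integrable_dirac' (a : ℝ) (g : ℝ → ℝ) (hg : Measurable g) :
    Integrable g (Measure.dirac a) := by
  refine ⟨hg.aestronglyMeasurable, ?_⟩
  simp [HasFiniteIntegral, lintegral_dirac]

lemma integral_bernoulliLaw {π : ℝ} (h0 : 0 ≤ π) (h1 : π ≤ 1) (g : ℝ → ℝ)
    (hg : Measurable g) :
    ∫ x, g x ∂(bernoulliLaw π) = (1 - π) * g 0 + π * g 1 := by
  have i0 : Integrable g (ENNReal.ofReal (1 - π) • Measure.dirac (0:ℝ)) :=
    (integrable_dirac' 0 g hg).smul_measure ENNReal.ofReal_ne_top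
  have i1 : Integrable g (ENNReal.ofReal π • Measure.dirac (1:ℝ)) :=
    (integrable_dirac' 1 g hg).smul_measure ENNReal.ofReal_ne_top
  rw [bernoulliLaw, integral_add_measure i0 i1, integral_smul_measure, integral_smul_measure,
    integral_dirac, integral_dirac, ENNReal.toReal_ofReal (by linarith),
    ENNReal.toReal_ofReal h0]
  simp [mul_comm]

lemma mgf_bernoulli {Ω : Type*} [MeasurableSpace Ω] (P : Measure Ω) (X : Ω → ℝ) (hX : Measurable X) {π : ℝ}
    (h0 : 0 ≤ π) (h1 : π ≤ 1) (hlaw : Measure.map X P = bernoulliLaw π) (t : ℝ) :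
    mgf X P t = (1 - π) + π * Real.exp t := by
  have hg : Measurable fun x : ℝ => Real.exp (t * x) :=
    (measurable_const_mul t).exp
  have : mgf X P t = ∫ x, Real.exp (t * x) ∂(Measure.map X P) :=
    (integral_map hX.aemeasurable hg.aestronglyMeasurable).symm
  rw [this, hlaw, integral_bernoulliLaw h0 h1 _ hg]
  simp

lemma ae_mem01 {Ω : Type*} [MeasurableSpace Ω] (P : Measure Ω) (X : Ω → ℝ) (hX : Measurable X) {π : ℝ}
    (hlaw : Measure.map X P = bernoulliLaw π) :
    ∀ᵐ ω ∂P, X ω ∈ ({0, 1} : Set ℝ) := by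
  have hms : MeasurableSet (({0, 1} : Set ℝ)ᶜ) := by measurability
  have h : P (X ⁻¹' ({0, 1} : Set ℝ)ᶜ) = 0 := by
    rw [← Measure.map_apply hX hms, hlaw]
    simp [bernoulliLaw, Measure.dirac_apply]
  rw [ae_iff]
  convert h using 2
  rfl

lemma sum_fun_eq {Ω : Type*} (Λ : ℕ → Ω → ℝ) (n : ℕ) :
    (fun ω => ∑ i ∈ Finset.range n, Λ i ω) = ∑ i ∈ Finset.range n, Λ i := by
  funext ω; simp

lemma tail_bound {Ω : Type*} [MeasurableSpace Ω] (P : Measure Ω) [IsProbabilityMeasure P]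
    (Λ : ℕ → Ω → ℝ) (hmeas : ∀ i, Measurable (Λ i))
    {π : ℝ} (hπ : π ∈ Set.Ioo (0 : ℝ) 1)
    (hiid : iIndepFun Λ P)
    (hlaw : ∀ i, Measure.map (Λ i) P = bernoulliLaw π)
    {t : ℝ} (ht : 0 ≤ t) (a : ℝ) (n : ℕ) :
    (P {ω | (n : ℝ) * a ≤ ∑ i ∈ Finset.range n, Λ i ω}).toReal ≤
      (Real.exp (-t * a) * ((1 - π) + π * Real.exp t)) ^ n := by
  set X : Ω → ℝ := ∑ i ∈ Finset.range n, Λ i with hX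
  have hXeq : ∀ ω, X ω = ∑ i ∈ Finset.range n, Λ i ω := by
    intro ω; rw [hX]; simp
  have hXmeas : Measurable X := by
    rw [hX, ← sum_fun_eq]
    exact Finset.measurable_sum _ fun i _ => hmeas i
  have hae : ∀ᵐ ω ∂P, ∀ i, Λ i ω ∈ ({0, 1} : Set ℝ) :=
    ae_all_iff.2 fun i => ae_mem01 P (Λ i) (hmeas i) (hlaw i)
  have haeX : ∀ᵐ ω ∂P, 0 ≤ X ω ∧ X ω ≤ n := by
    filter_upwards [hae] with ω hω
    have h01 : ∀ i, (0:ℝ) ≤ Λ i ω ∧ Λ i ω ≤ 1 := by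
      intro i
      have h := hω i
      simp only [Set.mem_insert_iff, Set.mem_singleton_iff] at h
      rcases h with h | h <;> simp [h]
    constructor
    · rw [hXeq]; exact Finset.sum_nonneg fun i _ => (h01 i).1
    · rw [hXeq]
      calc ∑ i ∈ Finset.range n, Λ i ω ≤ ∑ _i ∈ Finset.range n, (1:ℝ) :=
            Finset.sum_le_sum fun i _ => (h01 i).2
        _ = n := by simp
  have hint : Integrable (fun ω => Real.exp (t * X ω)) P := by
    refine Integrable.mono' (integrable_const (Real.exp (t * n)))
      ((hXmeas.const_mul t).exp.aestronglyMeasurable) ?_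
    filter_upwards [haeX] with ω hω
    rw [Real.norm_eq_abs, Real.abs_exp]
    exact Real.exp_le_exp.2 (mul_le_mul_of_nonneg_left hω.2 ht)
  have hcher := measure_ge_le_exp_mul_mgf (μ := P) (X := X) ((n : ℝ) * a) ht hint
  have hmgf : mgf X P t = ((1 - π) + π * Real.exp t) ^ n := by
    rw [hX, hiid.mgf_sum hmeas]
    rw [Finset.prod_congr rfl fun i _ =>
      mgf_bernoulli P (Λ i) (hmeas i) hπ.1.le hπ.2.le (hlaw i) t]
    simp
  have hset : {ω | (n : ℝ) * a ≤ ∑ i ∈ Finset.range n, Λ i ω} = {ω | (n : ℝ) * a ≤ X ω} := by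
    ext ω; simp [hXeq]
  rw [hset]
  calc (P {ω | (n : ℝ) * a ≤ X ω}).toReal ≤ Real.exp (-t * ((n:ℝ) * a)) * mgf X P t := hcher
    _ = (Real.exp (-t * a) * ((1 - π) + π * Real.exp t)) ^ n := by
        rw [hmgf, mul_pow, ← Real.exp_nat_mul]
        ring_nf

lemma exists_good_t {π ε : ℝ} (hπ0 : 0 < π) (hε : 0 < ε) :
    ∃ t : ℝ, 0 < t ∧ Real.exp (-t * (π + ε)) * ((1 - π) + π * Real.exp t) < 1 := by
  refine ⟨min 1 (ε / π), lt_min one_pos (div_pos hε hπ0), ?_⟩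
  set t := min 1 (ε / π) with htdef
  have ht : 0 < t := lt_min one_pos (div_pos hε hπ0)
  have ht1 : t ≤ 1 := min_le_left _ _
  have htε : π * t ≤ ε := by
    have h := min_le_right 1 (ε / π)
    calc π * t ≤ π * (ε / π) := by nlinarith
      _ = ε := by field_simp
  have h2 : Real.exp t ≤ 1 + t + t ^ 2 * (3 / 4) := by
    have h2' := Real.exp_bound' ht.le ht1 (n := 2) two_pos
    norm_num [Finset.sum_range_succ, Nat.factorial] at h2'
    nlinarith [h2']
  have key : (1 - π) + π * Real.exp t < Real.exp (t * (π + ε)) := by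
    have hle := Real.add_one_le_exp (t * (π + ε))
    nlinarith [mul_le_mul_of_nonneg_right htε ht.le, mul_pos hε ht, hπ0, ht]
  calc Real.exp (-t * (π + ε)) * ((1 - π) + π * Real.exp t)
      < Real.exp (-t * (π + ε)) * Real.exp (t * (π + ε)) :=
        mul_lt_mul_of_pos_left key (Real.exp_pos _)
    _ = 1 := by rw [← Real.exp_add]; ring_nf; exact Real.exp_zero

lemma integral_bound {Ω : Type*} [MeasurableSpace Ω] (P : Measure Ω) [IsProbabilityMeasure P]
    (Λ : ℕ → Ω → ℝ) (hmeas : ∀ i, Measurable (Λ i))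
    {π ε : ℝ} (hπ : π ∈ Set.Ioo (0 : ℝ) 1) (hε : 0 < ε) (hεπ : ε < 1 - π)
    (n : ℕ) (hn : 1 ≤ n) :
    ∫ ω, (n : ℝ) ^ 2 / (max ((n : ℝ) - ∑ i ∈ Finset.range n, Λ i ω) 1) ^ 2 ∂P ≤
      1 / (1 - π - ε) ^ 2 +
        (n : ℝ) ^ 2 * (P {ω | (n : ℝ) * (π + ε) ≤ ∑ i ∈ Finset.range n, Λ i ω}).toReal := by
  have hn0 : (0 : ℝ) < n := by exact_mod_cast hn
  set S : Ω → ℝ := fun ω => ∑ i ∈ Finset.range n, Λ i ω with hSdef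
  set f : Ω → ℝ := fun ω => (n : ℝ) ^ 2 / (max ((n : ℝ) - S ω) 1) ^ 2 with hfdef
  have hSmeas : Measurable S := Finset.measurable_sum _ fun i _ => hmeas i
  have hfmeas : Measurable f :=
    measurable_const.div (((measurable_const.sub hSmeas).max measurable_const).pow_const 2)
  have hmax1 : ∀ ω, (1 : ℝ) ≤ max ((n : ℝ) - S ω) 1 := fun ω => le_max_right _ _
  have hfnonneg : ∀ ω, 0 ≤ f ω := fun ω => div_nonneg (sq_nonneg _) (sq_nonneg _)
  have hfle : ∀ ω, f ω ≤ (n : ℝ) ^ 2 := by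
    intro ω
    have h1 : (1 : ℝ) ≤ (max ((n : ℝ) - S ω) 1) ^ 2 := by nlinarith [hmax1 ω]
    exact div_le_self (sq_nonneg _) h1
  have hfint : Integrable f P := by
    refine Integrable.mono' (integrable_const ((n : ℝ) ^ 2)) hfmeas.aestronglyMeasurable
      (ae_of_all _ fun ω => ?_)
    rw [Real.norm_eq_abs, abs_of_nonneg (hfnonneg ω)]
    exact hfle ω
  set A : Set Ω := {ω | S ω < (n : ℝ) * (π + ε)} with hAdef
  have hA : MeasurableSet A := measurableSet_lt hSmeas measurable_const
  have hAc : Aᶜ = {ω | (n : ℝ) * (π + ε) ≤ S ω} := by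
    ext ω; simp [hAdef, not_lt]
  have hsplit : ∫ ω, f ω ∂P = (∫ ω in A, f ω ∂P) + ∫ ω in Aᶜ, f ω ∂P :=
    (integral_add_compl hA hfint).symm
  have hgood : (∫ ω in A, f ω ∂P) ≤ 1 / (1 - π - ε) ^ 2 := by
    have hc : (0 : ℝ) < (n : ℝ) * (1 - π - ε) := mul_pos hn0 (by linarith)
    have hbd : ∀ ω ∈ A, f ω ≤ 1 / (1 - π - ε) ^ 2 := by
      intro ω hω
      have hω' : S ω < (n : ℝ) * (π + ε) := hω
      have hd : (n : ℝ) * (1 - π - ε) ≤ max ((n : ℝ) - S ω) 1 :=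
        le_max_of_le_left (by nlinarith)
      have step : f ω ≤ (n : ℝ) ^ 2 / ((n : ℝ) * (1 - π - ε)) ^ 2 := by
        show (n : ℝ) ^ 2 / (max ((n : ℝ) - S ω) 1) ^ 2 ≤ _
        gcongr
      have hnne : (n : ℝ) ≠ 0 := ne_of_gt hn0
      have hcne : (1 - π - ε) ≠ 0 := by intro h; rw [sub_eq_zero] at h; nlinarith
      have heq : (n : ℝ) ^ 2 / ((n : ℝ) * (1 - π - ε)) ^ 2 = 1 / (1 - π - ε) ^ 2 := by
        rw [mul_pow]
        field_simp
      rw [heq] at step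
      exact step
    calc (∫ ω in A, f ω ∂P) ≤ ∫ _ω in A, 1 / (1 - π - ε) ^ 2 ∂P :=
          setIntegral_mono_on hfint.integrableOn (integrableOn_const (measure_ne_top _ _)) hA hbd
      _ = (P A).toReal • (1 / (1 - π - ε) ^ 2) := by rw [setIntegral_const]; rfl
      _ ≤ 1 / (1 - π - ε) ^ 2 := by
          rw [smul_eq_mul]
          have h1 : (P A).toReal ≤ 1 := by
            simpa using ENNReal.toReal_mono (by simp) (prob_le_one (μ := P) (s := A))
          nlinarith [ENNReal.toReal_nonneg (a := P A), sq_nonneg (1 - π - ε),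
            one_div_nonneg.2 (sq_nonneg (1 - π - ε))]
  have hbad : (∫ ω in Aᶜ, f ω ∂P) ≤ (n : ℝ) ^ 2 * (P Aᶜ).toReal := by
    calc (∫ ω in Aᶜ, f ω ∂P) ≤ ∫ _ω in Aᶜ, (n : ℝ) ^ 2 ∂P :=
          setIntegral_mono_on hfint.integrableOn
            (integrableOn_const (measure_ne_top _ _)) hA.compl
            (fun ω _ => hfle ω)
      _ = (P Aᶜ).toReal • (n : ℝ) ^ 2 := by rw [setIntegral_const]; rfl
      _ = (n : ℝ) ^ 2 * (P Aᶜ).toReal := by rw [smul_eq_mul, mul_comm]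
  calc ∫ ω, f ω ∂P = (∫ ω in A, f ω ∂P) + ∫ ω in Aᶜ, f ω ∂P := hsplit
    _ ≤ 1 / (1 - π - ε) ^ 2 + (n : ℝ) ^ 2 * (P Aᶜ).toReal := add_le_add hgood hbad
    _ = _ := by rw [hAc]

/-- for i.i.d. Bernoulli(π) variables,
`limsup_n E[ n² / ((n − ΣΛᵢ) ∨ 1)² ] ≤ 1/(1−π)²`, and in particular the expectations
are bounded. -/
theorem stmt6 [MeasurableSpace Ω] (P : Measure Ω) [IsProbabilityMeasure P]
    (Λ : ℕ → Ω → ℝ) (hmeas : ∀ i, Measurable (Λ i))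
    (π : ℝ) (hπ : π ∈ Set.Ioo (0 : ℝ) 1)
    (hiid : iIndepFun Λ P)
    (hlaw : ∀ i, Measure.map (Λ i) P = bernoulliLaw π) :
    limsup (fun n : ℕ =>
        ∫ ω, (n : ℝ) ^ 2 / (max ((n : ℝ) - ∑ i ∈ Finset.range n, Λ i ω) 1) ^ 2 ∂P)
      atTop ≤ 1 / (1 - π) ^ 2 ∧
    ∃ C : ℝ, ∀ n : ℕ,
      (∫ ω, (n : ℝ) ^ 2 / (max ((n : ℝ) - ∑ i ∈ Finset.range n, Λ i ω) 1) ^ 2 ∂P) ≤ C := by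
  set u : ℕ → ℝ := fun n =>
    ∫ ω, (n : ℝ) ^ 2 / (max ((n : ℝ) - ∑ i ∈ Finset.range n, Λ i ω) 1) ^ 2 ∂P with hu
  have key : ∀ ε : ℝ, 0 < ε → ε < 1 - π → ∃ r : ℝ, 0 ≤ r ∧ r < 1 ∧ ∀ n : ℕ, 1 ≤ n →
      u n ≤ 1 / (1 - π - ε) ^ 2 + (n : ℝ) ^ 2 * r ^ n := by
    intro ε hε hεπ
    obtain ⟨t, ht, hr⟩ := exists_good_t hπ.1 hε
    refine ⟨Real.exp (-t * (π + ε)) * ((1 - π) + π * Real.exp t), ?_, hr, fun n hn => ?_⟩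
    · have h1 : (0:ℝ) ≤ (1 - π) + π * Real.exp t := by
        nlinarith [Real.exp_pos t, hπ.1, hπ.2]
      exact mul_nonneg (Real.exp_pos _).le h1
    · refine (integral_bound P Λ hmeas hπ hε hεπ n hn).trans ?_
      gcongr
      exact tail_bound P Λ hmeas hπ hiid hlaw ht.le (π + ε) n
  have hnonneg : ∀ n, 0 ≤ u n :=
    fun n => integral_nonneg fun ω => div_nonneg (sq_nonneg _) (sq_nonneg _)
  have hcob : IsCoboundedUnder (· ≤ ·) atTop u := isCoboundedUnder_le_of_le atTop hnonneg
  have htendr : ∀ r : ℝ, 0 ≤ r → r < 1 →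
      Tendsto (fun n : ℕ => (n : ℝ) ^ 2 * r ^ n) atTop (𝓝 0) := by
    intro r hr0 hr1
    have hnorm : ‖r‖ < 1 := by rwa [Real.norm_eq_abs, abs_of_nonneg hr0]
    exact ((summable_norm_pow_mul_geometric_of_norm_lt_one 2 hnorm).of_norm).tendsto_atTop_zero
  constructor
  · refine le_of_forall_gt_imp_ge_of_dense fun b hb => ?_
    have hcont : Tendsto (fun ε : ℝ => 1 / (1 - π - ε) ^ 2) (nhdsWithin 0 (Set.Ioi 0))
        (𝓝 (1 / (1 - π) ^ 2)) := by
      have hca : ContinuousAt (fun ε : ℝ => 1 / (1 - π - ε) ^ 2) 0 := by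
        apply ContinuousAt.div continuousAt_const (by fun_prop)
        have : (1 : ℝ) - π ≠ 0 := by intro h; rw [sub_eq_zero] at h; exact hπ.2.ne h.symm
        simp only [sub_zero]
        positivity
      have h2 : Tendsto (fun ε : ℝ => 1 / (1 - π - ε) ^ 2) (nhdsWithin 0 (Set.Ioi 0))
          (𝓝 (1 / (1 - π - 0) ^ 2)) :=
        hca.tendsto.mono_left nhdsWithin_le_nhds
      simpa using h2
    have hmem : ∀ᶠ ε in nhdsWithin (0:ℝ) (Set.Ioi 0), ε ∈ Set.Ioo (0:ℝ) (1 - π) :=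
      Ioo_mem_nhdsGT_of_mem ⟨le_refl 0, by linarith [hπ.2]⟩
    obtain ⟨ε, hεb, hεmem⟩ := ((hcont.eventually_lt_const hb).and hmem).exists
    obtain ⟨r, hr0, hr1, hbound⟩ := key ε hεmem.1 hεmem.2
    have hgap : 0 < b - 1 / (1 - π - ε) ^ 2 := by linarith
    have hev : ∀ᶠ n in atTop, u n ≤ b := by
      filter_upwards [eventually_ge_atTop 1,
        (htendr r hr0 hr1).eventually (gt_mem_nhds hgap)] with n hn1 hn2
      have := hbound n hn1
      linarith [hn2]
    exact limsup_le_of_le hcob hev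
  · obtain ⟨r, hr0, hr1, hbound⟩ := key ((1 - π) / 2) (by linarith [hπ.2]) (by linarith [hπ.2])
    obtain ⟨B, hB⟩ := (htendr r hr0 hr1).bddAbove_range
    refine ⟨max 0 (1 / (1 - π - (1 - π) / 2) ^ 2 + B), fun n => ?_⟩
    rcases Nat.eq_zero_or_pos n with h0 | h1
    · subst h0
      have h00 : u 0 = 0 := by simp [hu]
      show u 0 ≤ _
      rw [h00]
      exact le_max_left _ _
    · show u n ≤ _
      calc u n ≤ 1 / (1 - π - (1 - π) / 2) ^ 2 + (n : ℝ) ^ 2 * r ^ n := hbound n h1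
        _ ≤ 1 / (1 - π - (1 - π) / 2) ^ 2 + B := by
            have := hB (Set.mem_range_self n)
            linarith
        _ ≤ _ := le_max_right _ _
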